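/- Let $\lambda > 0$, $n \le N$, and let $A$ be an $n \times N$ complex matrix with $\lambda I_n = A\,E(n,N)\,A^*$. Then there exists an $N \times N$ complex matrix $W$ with $W\,E(n,N)\,W^* = E(n,N)$ such that $A\,W = (\sqrt{\lambda}\, I_n \;\; 0_{n \times (N-n)})$ after replacing $A$ by $\overline{A}$, i.e., $\overline{A}\,W = (\sqrt{\lambda}\, I_n \;\; 0)$. -/

import Mathlib

open Matrix

open scoped ComplexOrder in
lemma posDef_ofReal_smul {k : Type*} [Fintype k] {lam : ℝ} (hlam : 0 < lam)
    {M : Matrix k k ℂ} (hM : M.PosDef) : ((lam : ℂ) • M).PosDef := by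
  rw [posDef_iff_dotProduct_mulVec]
  refine ⟨?_, fun x hx => ?_⟩
  · have : ((lam : ℂ) • M)ᴴ = star (lam : ℂ) • Mᴴ := conjTranspose_smul _ _
    rw [Matrix.IsHermitian, this, hM.1.eq]
    simp [Complex.conj_ofReal]
  · rw [smul_mulVec, dotProduct_smul]
    have h0 : (0:ℂ) < (lam:ℂ) := by rw [Complex.zero_lt_real]; exact hlam
    exact mul_pos h0 (hM.dotProduct_mulVec_pos hx)

open scoped ComplexOrder MatrixOrder in
lemma aux_block {n m : Type*} [Fintype n] [Fintype m] [DecidableEq n] [DecidableEq m]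
    {lam : ℝ} (hlam : 0 < lam) (B₁ : Matrix n n ℂ) (B₂ : Matrix n m ℂ)
    (hkey : B₁ * B₁ᴴ - B₂ * B₂ᴴ = (lam : ℂ) • 1) :
    ∃ V : Matrix (n ⊕ m) (n ⊕ m) ℂ,
      Vᴴ * fromBlocks 1 0 0 (-1) * V = fromBlocks 1 0 0 (-1) ∧
      fromCols B₁ B₂ * V =
        fromCols ((((Real.sqrt lam : ℝ) : ℂ)) • 1) 0 := by
  classical
  set c : ℂ := ((Real.sqrt lam : ℝ) : ℂ) with hc
  have hc2 : c * c = (lam : ℂ) := by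
    rw [hc, ← Complex.ofReal_mul, Real.mul_self_sqrt hlam.le]
  have hc0 : c ≠ 0 := by
    rw [hc, Ne, Complex.ofReal_eq_zero]
    exact ne_of_gt (Real.sqrt_pos.mpr hlam)
  have hcc : c⁻¹ * c⁻¹ * (lam : ℂ) = 1 := by rw [← hc2]; field_simp
  have hcl : c⁻¹ * (lam : ℂ) = c := by
    rw [← hc2, ← mul_assoc, inv_mul_cancel₀ hc0, one_mul]
  have hcs : star c = c := by rw [hc, Complex.star_def, Complex.conj_ofReal]
  have hcsi : star c⁻¹ = c⁻¹ := by rw [star_inv₀, hcs]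
  set M1 := (lam : ℂ) • (1 : Matrix n n ℂ) + B₂ * B₂ᴴ with hM1
  set M2 := (lam : ℂ) • (1 : Matrix m m ℂ) + B₂ᴴ * B₂ with hM2
  have hM1pd : M1.PosDef :=
    Matrix.PosDef.add_posSemidef (posDef_ofReal_smul hlam Matrix.PosDef.one)
      (posSemidef_self_mul_conjTranspose B₂)
  have hM2pd : M2.PosDef :=
    Matrix.PosDef.add_posSemidef (posDef_ofReal_smul hlam Matrix.PosDef.one)
      (posSemidef_conjTranspose_mul_self B₂)
  have hM1d : IsUnit M1.det := (Matrix.isUnit_iff_isUnit_det _).mp hM1pd.isUnit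
  have hM2d : IsUnit M2.det := (Matrix.isUnit_iff_isUnit_det _).mp hM2pd.isUnit
  have hB₁M : B₁ * B₁ᴴ = M1 := by
    rw [hM1, ← hkey, sub_add_cancel]
  have hpush : B₂ * M2 = M1 * B₂ := by
    rw [hM1, hM2, Matrix.mul_add, Matrix.add_mul, Matrix.mul_smul, Matrix.smul_mul,
      Matrix.mul_one, Matrix.one_mul, Matrix.mul_assoc]
  have hswap : M1⁻¹ * B₂ = B₂ * M2⁻¹ := by
    calc M1⁻¹ * B₂ = M1⁻¹ * (B₂ * (M2 * M2⁻¹)) := by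
          rw [mul_nonsing_inv _ hM2d, Matrix.mul_one]
      _ = M1⁻¹ * (M1 * (B₂ * M2⁻¹)) := by
          rw [← Matrix.mul_assoc B₂ M2 M2⁻¹, hpush, Matrix.mul_assoc]
      _ = B₂ * M2⁻¹ := by rw [← Matrix.mul_assoc, nonsing_inv_mul _ hM1d, Matrix.one_mul]
  set H := (lam : ℂ) • M2⁻¹ with hH
  have hHpd : H.PosDef := posDef_ofReal_smul hlam hM2pd.inv
  have hBMB : B₂ᴴ * M1⁻¹ * B₂ = 1 - H := by
    rw [Matrix.mul_assoc, hswap, ← Matrix.mul_assoc]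
    have h2 : B₂ᴴ * B₂ = M2 - (lam : ℂ) • 1 := by rw [hM2, add_sub_cancel_left]
    rw [h2, Matrix.sub_mul, mul_nonsing_inv _ hM2d, Matrix.smul_mul, Matrix.one_mul, hH]
  set R := CFC.sqrt H with hR
  have hRsq : R * R = H := CFC.sqrt_mul_sqrt_self H hHpd.posSemidef.nonneg
  have hRherm : Rᴴ = R := (CFC.sqrt_nonneg H).posSemidef.1
  have hRd : IsUnit R.det := by
    have hdet : R.det * R.det = H.det := by rw [← det_mul, hRsq]
    have hH0 : H.det ≠ 0 := ne_of_gt hHpd.det_pos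
    rw [isUnit_iff_ne_zero]
    intro h0
    rw [h0, mul_zero] at hdet
    exact hH0 hdet.symm
  have hRiH : R⁻¹ᴴ = R⁻¹ := by rw [conjTranspose_nonsing_inv, hRherm]
  have hRHR : R⁻¹ * H * R⁻¹ = 1 := by
    rw [← hRsq, ← Matrix.mul_assoc, nonsing_inv_mul _ hRd, Matrix.one_mul,
      mul_nonsing_inv _ hRd]
  set X := -(B₁ᴴ * M1⁻¹ * B₂) with hX
  have hB₁X : B₁ * X = -B₂ := by
    rw [hX, Matrix.mul_neg, neg_inj]
    calc B₁ * (B₁ᴴ * M1⁻¹ * B₂) = B₁ * B₁ᴴ * (M1⁻¹ * B₂) := by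
          simp only [Matrix.mul_assoc]
      _ = B₂ := by rw [hB₁M, mul_nonsing_inv_cancel_left _ _ hM1d]
  have hXH : Xᴴ = -(B₂ᴴ * M1⁻¹ * B₁) := by
    rw [hX, conjTranspose_neg, conjTranspose_mul, conjTranspose_mul,
      conjTranspose_nonsing_inv, hM1pd.1.eq, conjTranspose_conjTranspose, Matrix.mul_assoc]
  have hXX : Xᴴ * X = 1 - H := by
    rw [hXH, hX, Matrix.neg_mul, Matrix.mul_neg, neg_neg]
    calc B₂ᴴ * M1⁻¹ * B₁ * (B₁ᴴ * M1⁻¹ * B₂)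
        = B₂ᴴ * (M1⁻¹ * (B₁ * B₁ᴴ * (M1⁻¹ * B₂))) := by simp only [Matrix.mul_assoc]
      _ = B₂ᴴ * (M1⁻¹ * B₂) := by
          rw [hB₁M, mul_nonsing_inv_cancel_left _ _ hM1d]
      _ = 1 - H := by rw [← Matrix.mul_assoc]; exact hBMB
  have hXB : Xᴴ * B₁ᴴ = -B₂ᴴ := by
    rw [← conjTranspose_mul, hB₁X, conjTranspose_neg]
  refine ⟨fromBlocks (c⁻¹ • B₁ᴴ) (X * R⁻¹) (-(c⁻¹ • B₂ᴴ)) R⁻¹, ?_, ?_⟩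
  · have hFV : (fromBlocks 1 0 0 (-1) : Matrix (n ⊕ m) (n ⊕ m) ℂ) *
        fromBlocks (c⁻¹ • B₁ᴴ) (X * R⁻¹) (-(c⁻¹ • B₂ᴴ)) R⁻¹ =
        fromBlocks (c⁻¹ • B₁ᴴ) (X * R⁻¹) (c⁻¹ • B₂ᴴ) (-R⁻¹) := by
      rw [fromBlocks_multiply]
      congr 1 <;> simp
    rw [mul_assoc, hFV, fromBlocks_conjTranspose, fromBlocks_multiply]
    simp only [conjTranspose_neg, conjTranspose_smul, conjTranspose_mul,
      conjTranspose_conjTranspose, hcsi, hRiH]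
    have h11 : c⁻¹ • B₁ * c⁻¹ • B₁ᴴ + -(c⁻¹ • B₂) * c⁻¹ • B₂ᴴ = (1 : Matrix n n ℂ) := by
      simp only [Matrix.neg_mul, Matrix.smul_mul, Matrix.mul_smul, smul_smul,
        ← smul_neg, ← smul_add, ← sub_eq_add_neg]
      rw [hkey, smul_smul, hcc, one_smul]
    have h12 : c⁻¹ • B₁ * (X * R⁻¹) + -(c⁻¹ • B₂) * -R⁻¹ = (0 : Matrix n m ℂ) := by
      simp only [Matrix.neg_mul, Matrix.mul_neg, neg_neg, Matrix.smul_mul,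
        ← Matrix.mul_assoc]
      rw [hB₁X, Matrix.neg_mul, ← smul_add, neg_add_cancel, smul_zero]
    have h21 : R⁻¹ * Xᴴ * c⁻¹ • B₁ᴴ + R⁻¹ * c⁻¹ • B₂ᴴ = (0 : Matrix m n ℂ) := by
      simp only [Matrix.mul_smul, Matrix.mul_assoc]
      rw [hXB, Matrix.mul_neg, ← smul_add, neg_add_cancel, smul_zero]
    have h22 : R⁻¹ * Xᴴ * (X * R⁻¹) + R⁻¹ * -R⁻¹ = -(1 : Matrix m m ℂ) := by
      have hassoc : R⁻¹ * Xᴴ * (X * R⁻¹) = R⁻¹ * (Xᴴ * X) * R⁻¹ := by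
        simp only [Matrix.mul_assoc]
      rw [hassoc, hXX, Matrix.mul_neg, Matrix.mul_sub, Matrix.sub_mul, Matrix.mul_one, hRHR]
      abel
    rw [h11, h12, h21, h22]
  · rw [fromCols_mul_fromBlocks]
    have hl : B₁ * (c⁻¹ • B₁ᴴ) + B₂ * -(c⁻¹ • B₂ᴴ) = c • 1 := by
      rw [Matrix.mul_smul, Matrix.mul_neg, Matrix.mul_smul, ← smul_neg, ← smul_add,
        ← sub_eq_add_neg, hkey, smul_smul, hcl]
    have hr : B₁ * (X * R⁻¹) + B₂ * R⁻¹ = 0 := by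
      rw [← Matrix.mul_assoc, hB₁X, Matrix.neg_mul, neg_add_cancel]
    rw [hl, hr]

/-- The signature matrix `E(n,N)`: diagonal with first `n` entries `1`, rest `-1`. -/
def sigMatrix (l N : ℕ) : Matrix (Fin N) (Fin N) ℂ :=
  Matrix.diagonal (fun j => if (j : ℕ) < l then 1 else -1)

/-- If `λ Iₙ = A E(n,N) A*` with `λ > 0` and `n ≤ N`, there exists `W` in the
indefinite unitary group `U(n, N-n)` (i.e. `W E(n,N) W* = E(n,N)`) with
`conj(A) ⬝ W = (√λ Iₙ | 0)`. -/
theorem stmt12 (n N : ℕ) (hnN : n ≤ N) (lam : ℝ) (hlam : 0 < lam)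
    (A : Matrix (Fin n) (Fin N) ℂ)
    (h : (lam : ℂ) • (1 : Matrix (Fin n) (Fin n) ℂ) = A * sigMatrix n N * Aᴴ) :
    ∃ W : Matrix (Fin N) (Fin N) ℂ,
      W * sigMatrix n N * Wᴴ = sigMatrix n N ∧
      (A.map (starRingEnd ℂ)) * W =
        Matrix.of (fun (i : Fin n) (j : Fin N) =>
          if (j : ℕ) = (i : ℕ) then (Real.sqrt lam : ℂ) else 0) := by
  classical
  set m := N - n with hm_def
  have hm : n + m = N := Nat.add_sub_cancel' hnN
  set e : Fin n ⊕ Fin m ≃ Fin N := finSumFinEquiv.trans (finCongr hm) with he_def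
  -- the signature matrix in block coordinates
  have hE : sigMatrix n N = (fromBlocks (1 : Matrix (Fin n) (Fin n) ℂ) 0 0
      (-1 : Matrix (Fin m) (Fin m) ℂ)).submatrix ⇑e.symm ⇑e.symm := by
    have hF : (fromBlocks (1 : Matrix (Fin n) (Fin n) ℂ) 0 0 (-1 : Matrix (Fin m) (Fin m) ℂ))
        = diagonal (Sum.elim (fun _ : Fin n => (1:ℂ)) (fun _ : Fin m => (-1:ℂ))) := by
      ext i j
      rcases i with i | i <;> rcases j with j | j
      · by_cases hij : i = j <;> simp [diagonal_apply, one_apply, hij]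
      · simp [diagonal_apply]
      · simp [diagonal_apply]
      · by_cases hij : i = j <;> simp [diagonal_apply, one_apply, hij]
    rw [hF, submatrix_diagonal_equiv]
    refine congrArg diagonal (funext fun j => ?_)
    show (if (j:ℕ) < n then (1:ℂ) else -1) = Sum.elim _ _ (e.symm j)
    rcases hj : e.symm j with a | b
    · have hv : (j:ℕ) = a := by
        rw [show j = e (Sum.inl a) by rw [← hj, Equiv.apply_symm_apply]]
        simp [he_def]
      simp [hv, a.isLt]
    · have hv : (j:ℕ) = n + b := by
        rw [show j = e (Sum.inr b) by rw [← hj, Equiv.apply_symm_apply]]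
        simp [he_def]
      simp [hv]
  -- conjugate matrix
  set B := A.map (starRingEnd ℂ) with hB_def
  have hBE : B * sigMatrix n N * Bᴴ = (lam : ℂ) • 1 := by
    have hc := congrArg (fun M : Matrix (Fin n) (Fin n) ℂ => M.map (starRingEnd ℂ)) h
    simp only [Matrix.map_mul] at hc
    have h1 : ((lam : ℂ) • (1 : Matrix (Fin n) (Fin n) ℂ)).map (starRingEnd ℂ)
        = (lam : ℂ) • 1 := by
      ext i j
      by_cases hij : i = j <;> simp [hij, one_apply, Complex.conj_ofReal]
    have h2 : (sigMatrix n N).map (starRingEnd ℂ) = sigMatrix n N := by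
      ext i j
      by_cases hij : i = j
      · subst hij
        simp only [map_apply, sigMatrix, diagonal_apply_eq]
        split_ifs <;> simp
      · simp [sigMatrix, diagonal_apply, hij]
    have h3 : (Aᴴ).map (starRingEnd ℂ) = (A.map (starRingEnd ℂ))ᴴ := by
      ext i j
      simp [conjTranspose_apply]
    rw [h1, h2, h3] at hc
    exact hc.symm
  set Bs := B.submatrix id ⇑e with hBs
  set B₁ := Bs.toCols₁ with hB₁
  set B₂ := Bs.toCols₂ with hB₂
  have hBsub : B = Bs.submatrix id ⇑e.symm := by
    rw [hBs, submatrix_submatrix]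
    simp [Equiv.self_comp_symm]
  have e2 := submatrix_mul_equiv (Bs * fromBlocks 1 0 0 (-1)) Bsᴴ id e.symm id
  have e1 := submatrix_mul_equiv Bs
    (fromBlocks (1 : Matrix (Fin n) (Fin n) ℂ) 0 0 (-1)) id e.symm ⇑e.symm
  have h1 : Bs * (Matrix.fromBlocks 1 0 0 (-1) : Matrix (Fin n ⊕ Fin m) (Fin n ⊕ Fin m) ℂ) * Bsᴴ
      = ((lam : ℂ) • 1 : Matrix (Fin n) (Fin n) ℂ) := by
    calc Bs * (Matrix.fromBlocks 1 0 0 (-1) : Matrix (Fin n ⊕ Fin m) (Fin n ⊕ Fin m) ℂ) * Bsᴴ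
        = (Bs * (Matrix.fromBlocks 1 0 0 (-1) : Matrix (Fin n ⊕ Fin m) (Fin n ⊕ Fin m) ℂ) * Bsᴴ).submatrix id id := (submatrix_id_id _).symm
      _ = (Bs * (Matrix.fromBlocks 1 0 0 (-1) : Matrix (Fin n ⊕ Fin m) (Fin n ⊕ Fin m) ℂ)).submatrix id ⇑e.symm
            * Bsᴴ.submatrix (⇑e.symm) id := e2.symm
      _ = (Bs.submatrix id ⇑e.symm * (Matrix.fromBlocks 1 0 0 (-1) : Matrix (Fin n ⊕ Fin m) (Fin n ⊕ Fin m) ℂ).submatrix (⇑e.symm) ⇑e.symm)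
            * Bsᴴ.submatrix (⇑e.symm) id := by rw [e1]
      _ = B * sigMatrix n N * Bᴴ := by
            have hBH : Bᴴ = Bsᴴ.submatrix (⇑e.symm) id := by
              rw [hBsub, conjTranspose_submatrix]
            rw [← hBsub, ← hE, hBH]
      _ = (lam : ℂ) • 1 := hBE
  have hkey : B₁ * B₁ᴴ - B₂ * B₂ᴴ = (lam : ℂ) • 1 := by
    rw [← h1, ← fromCols_toCols Bs, ← hB₁, ← hB₂,
      fromCols_mul_fromBlocks, conjTranspose_fromCols_eq_fromRows_conjTranspose,
      fromCols_mul_fromRows]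
    simp [sub_eq_add_neg]
  obtain ⟨V, hV1, hV2⟩ := aux_block hlam B₁ B₂ hkey
  refine ⟨V.submatrix ⇑e.symm ⇑e.symm, ?_, ?_⟩
  · -- indefinite unitarity
    set W := V.submatrix ⇑e.symm ⇑e.symm with hW
    have hWH : Wᴴ = Vᴴ.submatrix ⇑e.symm ⇑e.symm := by
      rw [hW, conjTranspose_submatrix]
    have hWEW : Wᴴ * sigMatrix n N * W = sigMatrix n N := by
      rw [hE, hWH, hW]
      rw [submatrix_mul_equiv Vᴴ (fromBlocks 1 0 0 (-1)) ⇑e.symm e.symm ⇑e.symm]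
      rw [submatrix_mul_equiv (Vᴴ * fromBlocks 1 0 0 (-1)) V ⇑e.symm e.symm ⇑e.symm]
      rw [hV1]
    have hEE : sigMatrix n N * sigMatrix n N = 1 := by
      unfold sigMatrix
      rw [diagonal_mul_diagonal, ← diagonal_one]
      refine congrArg diagonal (funext fun j => ?_)
      split_ifs <;> norm_num
    have hcomm : (Wᴴ * sigMatrix n N) * (W * sigMatrix n N) = 1 := by
      calc (Wᴴ * sigMatrix n N) * (W * sigMatrix n N)
          = (Wᴴ * sigMatrix n N * W) * sigMatrix n N := by
            simp only [Matrix.mul_assoc]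
        _ = 1 := by rw [hWEW, hEE]
    have hcomm' : (W * sigMatrix n N) * (Wᴴ * sigMatrix n N) = 1 :=
      mul_eq_one_comm.mp hcomm
    calc W * sigMatrix n N * Wᴴ
        = W * sigMatrix n N * Wᴴ * (sigMatrix n N * sigMatrix n N) := by
          rw [hEE, Matrix.mul_one]
      _ = ((W * sigMatrix n N) * (Wᴴ * sigMatrix n N)) * sigMatrix n N := by
          simp only [Matrix.mul_assoc]
      _ = sigMatrix n N := by rw [hcomm', Matrix.one_mul]
  · -- the product identity
    have hmul : B * V.submatrix ⇑e.symm ⇑e.symm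
        = (Bs * V).submatrix id ⇑e.symm := by
      rw [hBsub, submatrix_mul_equiv Bs V id e.symm ⇑e.symm]
    rw [hmul, ← fromCols_toCols Bs, ← hB₁, ← hB₂, hV2]
    ext i j
    rw [submatrix_apply, of_apply]
    rcases hj : e.symm j with a | b
    · have hv : (j:ℕ) = a := by
        rw [show j = e (Sum.inl a) by rw [← hj, Equiv.apply_symm_apply]]
        simp [he_def]
      by_cases hji : (j:ℕ) = (i:ℕ)
      · have hia : i = a := Fin.ext (by omega)
        simp [fromCols, hia, hji, one_apply]
      · have hia : a ≠ i := fun hh => hji (by rw [hv, hh])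
        simp [fromCols, one_apply, Ne.symm hia, hji]
    · have hv : (j:ℕ) = n + b := by
        rw [show j = e (Sum.inr b) by rw [← hj, Equiv.apply_symm_apply]]
        simp [he_def]
      have hji : ¬ ((j:ℕ) = (i:ℕ)) := by omega
      simp [fromCols, hji]
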